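/- If f ∈ C_c(U) and σ restricted to supp(f) is injective, then sup_{x ∈ X} |L(conj(f)·f)(x)| = (sup_{x ∈ X} |f(x)|)². -/

import Mathlib

/-- `σ : U → X` is a local homeomorphism. -/
def IsLocalHomeo {X : Type*} [TopologicalSpace X] (σ : X → X) (U : Set X) : Prop :=
  ∀ x ∈ U, ∃ W : Set X, x ∈ W ∧ W ⊆ U ∧ IsOpen W ∧ IsOpen (σ '' W) ∧
    Set.InjOn σ W ∧ ContinuousOn σ W ∧ ∀ V : Set X, V ⊆ W → IsOpen V → IsOpen (σ '' V)

/-- `f` is a continuous function on `X` with compact support contained in `U`. -/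
def MemCc {X : Type*} [TopologicalSpace X] (U : Set X) (f : X → ℂ) : Prop :=
  Continuous f ∧ IsCompact (tsupport f) ∧ tsupport f ⊆ U

/-- The transfer operator: `L f x = ∑_{y ∈ U, σ y = x} f y` (a finite sum for
`f ∈ C_c(U)`; the empty sum, in particular the case `σ⁻¹(x) = ∅`, gives `0`). -/
noncomputable def Lop {X : Type*} [TopologicalSpace X] (σ : X → X) (U : Set X)
    (f : X → ℂ) : X → ℂ :=
  fun x => ∑ᶠ y ∈ {y : X | y ∈ U ∧ σ y = x}, f y

/-- If `f ∈ C_c(U)` and `σ` is injective on `supp f`, then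
`sup_x |L(conj f · f)(x)| = (sup_x |f x|)²`. -/
theorem stmt_3 {X : Type*} [TopologicalSpace X] [CompactSpace X] [T2Space X]
    (U : Set X) (hU : IsOpen U) (σ : X → X) (hσ : IsLocalHomeo σ U)
    (f : X → ℂ) (hf : MemCc U f) (hinj : Set.InjOn σ (tsupport f)) :
    (⨆ x : X, ‖Lop σ U (fun y => (starRingEnd ℂ) (f y) * f y) x‖)
      = (⨆ x : X, ‖f x‖) ^ 2 := by

  classical
  obtain ⟨hfc, hfK, hfU⟩ := hf
  set g : X → ℂ := fun y => (starRingEnd ℂ) (f y) * f y with hg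
  have hsupp : Function.support g = Function.support f := by
    ext y; simp [hg, mul_eq_zero, map_eq_zero]
  have habs : ∀ y, ‖g y‖ = ‖f y‖ ^ 2 := by
    intro y; simp [hg, map_mul, sq]
  rcases isEmpty_or_nonempty X with hX | hX
  · simp [Real.iSup_of_isEmpty]
  -- key computation: each value of Lop is 0 or g y for some y with f y ≠ 0
  have key : ∀ x, Lop σ U g x = 0 ∨ ∃ y, f y ≠ 0 ∧ Lop σ U g x = g y := by
    intro x
    have hsub : ({y | y ∈ U ∧ σ y = x} ∩ Function.support g).Subsingleton := by
      rintro a ⟨⟨_, ha⟩, ha'⟩ b ⟨⟨_, hb⟩, hb'⟩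
      exact hinj (subset_tsupport f (hsupp ▸ ha')) (subset_tsupport f (hsupp ▸ hb'))
        (by rw [ha, hb])
    rcases hsub.eq_empty_or_singleton with h | ⟨y, h⟩
    · left
      rw [Lop, ← finsum_mem_inter_support, h, finsum_mem_empty]
    · right
      have hy : y ∈ {y | y ∈ U ∧ σ y = x} ∩ Function.support g := by
        rw [h]; exact rfl
      refine ⟨y, ?_, ?_⟩
      · rw [← Function.mem_support, ← hsupp]; exact hy.2
      · rw [Lop, ← finsum_mem_inter_support, h, finsum_mem_singleton]
  have keyB : ∀ y, f y ≠ 0 → Lop σ U g (σ y) = g y := by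
    intro y hy
    have hyt : y ∈ tsupport f := subset_tsupport f hy
    have hs : {z | z ∈ U ∧ σ z = σ y} ∩ Function.support g = {y} := by
      apply Set.eq_singleton_iff_unique_mem.2
      refine ⟨⟨⟨hfU hyt, rfl⟩, hsupp ▸ hy⟩, ?_⟩
      rintro z ⟨⟨_, hz⟩, hz'⟩
      exact hinj (subset_tsupport f (hsupp ▸ hz')) hyt hz
    rw [Lop, ← finsum_mem_inter_support, hs, finsum_mem_singleton]
  -- boundedness of |f|
  have hcont : Continuous fun x => ‖f x‖ := continuous_norm.comp hfc
  have hbddf : BddAbove (Set.range fun x => ‖f x‖) :=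
    (isCompact_range hcont).bddAbove
  set M : ℝ := ⨆ x : X, ‖f x‖ with hM
  have hleM : ∀ x, ‖f x‖ ≤ M := fun x => le_ciSup hbddf x
  obtain ⟨x₀⟩ := id hX
  have hM0 : 0 ≤ M := le_trans (norm_nonneg _) (hleM x₀)
  have hbound : ∀ x, ‖Lop σ U g x‖ ≤ M ^ 2 := by
    intro x
    rcases key x with h | ⟨y, hy, h⟩
    · rw [h]; simpa using pow_nonneg hM0 2
    · rw [h, habs]
      exact pow_le_pow_left₀ (norm_nonneg _) (hleM y) 2
  have hbddL : BddAbove (Set.range fun x => ‖Lop σ U g x‖) :=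
    ⟨M ^ 2, by rintro _ ⟨x, rfl⟩; exact hbound x⟩
  -- max of |f| attained
  obtain ⟨y₀, -, hy₀⟩ := isCompact_univ.exists_isMaxOn ⟨x₀, trivial⟩ hcont.continuousOn
  have hMeq : M = ‖f y₀‖ :=
    le_antisymm (ciSup_le fun y => hy₀ (Set.mem_univ y)) (hleM y₀)
  refine le_antisymm (ciSup_le hbound) ?_
  by_cases hfy : f y₀ = 0
  · have : M = 0 := by rw [hMeq, hfy, norm_zero]
    rw [this]
    simpa using le_trans (norm_nonneg _) (le_ciSup hbddL x₀)
  · have := le_ciSup hbddL (σ y₀)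
    rwa [keyB y₀ hfy, habs, ← hMeq] at this
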